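/- There exists, for every n > 1, a Stable Marriage instance with n men and n women and a stable matching M in it such that any sequence of fewer than n−1 adjacent-transposition swaps applied to the preference lists leaves M stable. Concretely, in the instance where man u_i has preferences w_i ≻ w_{i+1} ≻ … ≻ w_n ≻ w_1 ≻ … ≻ w_{i−1} and woman w_i has preferences u_i ≻ u_{i+1} ≻ … ≻ u_n ≻ u_1 ≻ … ≻ u_{i−1}, the matching {{u_i, w_i} : i ∈ [n]} cannot be made unstable by fewer than n−1 swaps. -/

import Mathlib

open Finset

/-- A Stable Marriage profile with `n` men and `n` women: each man's (resp. woman's)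
preference list is given by a rank permutation assigning each woman (resp. man)
her position (smaller = more preferred). -/
abbrev SMProfile (n : ℕ) := (Fin n → Equiv.Perm (Fin n)) × (Fin n → Equiv.Perm (Fin n))

/-- Kendall tau (inversion / swap) distance between two preference rankings. -/
def kendall {n : ℕ} (p q : Equiv.Perm (Fin n)) : ℕ :=
  ((Finset.univ ×ˢ Finset.univ : Finset (Fin n × Fin n)).filter
    (fun x => p x.1 < p x.2 ∧ q x.2 < q x.1)).card

/-- Swap distance between two profiles: sum of the Kendall tau distances of all lists. -/
def profileDist {n : ℕ} (P Q : SMProfile n) : ℕ :=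
  (∑ u, kendall (P.1 u) (Q.1 u)) + ∑ w, kendall (P.2 w) (Q.2 w)

/-- Pair `{u,w}` blocks the (perfect) matching `M` in profile `P`. -/
def Blocks {n : ℕ} (P : SMProfile n) (M : Equiv.Perm (Fin n)) (u w : Fin n) : Prop :=
  M u ≠ w ∧ P.1 u w < P.1 u (M u) ∧ P.2 w u < P.2 w (M.symm w)

/-- The matching `M` is stable in profile `P`. -/
def IsStable {n : ℕ} (P : SMProfile n) (M : Equiv.Perm (Fin n)) : Prop :=
  ∀ u w, ¬ Blocks P M u w

/-- The "Robust" instance: man `u_i` has preferences `w_i ≻ w_{i+1} ≻ … ≻ w_{i-1}`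
(cyclically), and symmetrically for women: the rank of `w` in `u_i`'s list is `w - i`. -/
def robustProfile (n : ℕ) [NeZero n] : SMProfile n :=
  (fun i => Equiv.subRight i, fun i => Equiv.subRight i)

/-- Rank of `a` under a permutation equals the number of elements mapped below it. -/
lemma card_rank {n : ℕ} (p : Equiv.Perm (Fin n)) (a : Fin n) :
    (Finset.univ.filter (fun x => p x < p a)).card = (p a : ℕ) := by
  rw [← Fin.card_Iio (p a)]
  apply Finset.card_bij (fun x _ => p x)
  · intro x hx; simp only [Finset.mem_filter] at hx; simpa using hx.2
  · intro x hx y hy h; exact p.injective h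
  · intro y hy
    refine ⟨p.symm y, ?_, by simp⟩
    simp only [Finset.mem_filter, Finset.mem_univ, true_and, Equiv.apply_symm_apply]
    simpa using hy

/-- Rank drop lemma: `(p a) ≤ #{x | p x < p a ∧ q a < q x} + (q a)`. -/
lemma rank_drop {n : ℕ} (p q : Equiv.Perm (Fin n)) (a : Fin n) :
    (p a : ℕ) ≤ (Finset.univ.filter (fun x => p x < p a ∧ q a < q x)).card + (q a : ℕ) := by
  rw [← card_rank p a, ← card_rank q a]
  have hsub : Finset.univ.filter (fun x => p x < p a) ⊆
      (Finset.univ.filter (fun x => p x < p a ∧ q a < q x)) ∪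
      (Finset.univ.filter (fun x => q x < q a)) := by
    intro x hx
    simp only [Finset.mem_filter, Finset.mem_univ, true_and, Finset.mem_union] at *
    rcases lt_trichotomy (q x) (q a) with h | h | h
    · exact Or.inr h
    · exact absurd (congrArg p (q.injective h)) (by simp_all [lt_irrefl])
    · exact Or.inl ⟨hx, h⟩
  calc (Finset.univ.filter (fun x => p x < p a)).card
      ≤ _ := Finset.card_le_card hsub
    _ ≤ _ := Finset.card_union_le _ _

/-- Key lemma: if `p u` is the top choice and `q` ranks `w` above `u`,
then the Kendall distance from `p` to `q` is at least the `p`-rank of `w`. -/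
lemma key {n : ℕ} (p q : Equiv.Perm (Fin n)) (u w : Fin n)
    (hpu : (p u : ℕ) = 0) (hq : q w < q u) : (p w : ℕ) ≤ kendall p q := by
  classical
  set A := Finset.univ.filter (fun x => p x < p w ∧ q w < q x) with hA
  set B := Finset.univ.filter (fun x => p u < p x ∧ q x < q u) with hB
  set F := ((Finset.univ ×ˢ Finset.univ : Finset (Fin n × Fin n)).filter
    (fun x => p x.1 < p x.2 ∧ q x.2 < q x.1)) with hF
  have hA' : ((A.erase u).image (fun x => (x, w))) ⊆ F := by
    intro z hz
    simp only [Finset.mem_image] at hz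
    obtain ⟨x, hx, rfl⟩ := hz
    have hx' := Finset.mem_of_mem_erase hx
    simp only [hA, Finset.mem_filter] at hx'
    simp only [hF, Finset.mem_filter, Finset.mem_product]
    exact ⟨⟨Finset.mem_univ _, Finset.mem_univ _⟩, hx'.2⟩
  have hB' : (B.image (fun x => (u, x))) ⊆ F := by
    intro z hz
    simp only [Finset.mem_image] at hz
    obtain ⟨x, hx, rfl⟩ := hz
    simp only [hB, Finset.mem_filter] at hx
    simp only [hF, Finset.mem_filter, Finset.mem_product]
    exact ⟨⟨Finset.mem_univ _, Finset.mem_univ _⟩, hx.2⟩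
  have hdisj : Disjoint ((A.erase u).image (fun x => (x, w))) (B.image (fun x => (u, x))) := by
    rw [Finset.disjoint_left]
    intro z hz1 hz2
    simp only [Finset.mem_image] at hz1 hz2
    obtain ⟨x, hx, rfl⟩ := hz1
    obtain ⟨y, hy, hxy⟩ := hz2
    have : x = u := (Prod.mk.injEq _ _ _ _ ▸ hxy.symm).1
    exact (Finset.ne_of_mem_erase hx) this
  have hcard : (A.erase u).card + B.card ≤ F.card := by
    have inj1 : Function.Injective (fun x : Fin n => (x, w)) :=
      fun a b h => by simpa using congrArg Prod.fst h
    have inj2 : Function.Injective (fun x : Fin n => (u, x)) :=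
      fun a b h => by simpa using congrArg Prod.snd h
    rw [← Finset.card_image_of_injective (A.erase u) inj1,
      ← Finset.card_image_of_injective B inj2]
    rw [← Finset.card_union_of_disjoint hdisj]
    exact Finset.card_le_card (Finset.union_subset hA' hB')
  have h1 : (p w : ℕ) ≤ A.card + (q w : ℕ) := rank_drop p q w
  have h2 : (q u : ℕ) ≤ B.card + (p u : ℕ) := by
    have := rank_drop q p u
    have heq : Finset.univ.filter (fun x => q x < q u ∧ p u < p x) = B := by
      simp only [hB]; ext x; simp [and_comm]
    rwa [heq] at this
  have h3 : A.card ≤ (A.erase u).card + 1 := by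
    rcases Finset.decidableMem u A with h | h
    · rw [Finset.erase_eq_of_notMem h]; omega
    · rw [Finset.card_erase_of_mem h]; omega
  have h4 : (q w : ℕ) + 1 ≤ (q u : ℕ) := hq
  have := hcard
  have hFk : kendall p q = F.card := rfl
  omega

lemma sub_val_add {n : ℕ} [NeZero n] (u w : Fin n) (h : u ≠ w) :
    ((w - u : Fin n) : ℕ) + ((u - w : Fin n) : ℕ) = n := by
  have h1 : (w - u : Fin n) ≠ 0 := sub_ne_zero.mpr (Ne.symm h)
  have h2 : (u - w : Fin n) = -(w - u) := (neg_sub w u).symm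
  rw [h2]
  rw [Fin.neg_def]
  have hlt : ((w - u : Fin n) : ℕ) < n := (w - u).isLt
  have hpos : 0 < ((w - u : Fin n) : ℕ) := by
    rcases Nat.eq_zero_or_pos ((w - u : Fin n) : ℕ) with h | h
    · exact absurd (Fin.ext h) h1
    · exact h
  simp only [Fin.val_mk]
  rw [Nat.mod_eq_of_lt (by omega)]
  omega

/-- in the Robust instance, the identity matching `{{u_i, w_i}}` is stable,
and it remains stable in every profile at swap distance less than n − 1. -/
theorem stmt1 (n : ℕ) [NeZero n] (hn : 1 < n) :
    IsStable (robustProfile n) (Equiv.refl (Fin n)) ∧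
    ∀ Q : SMProfile n, profileDist (robustProfile n) Q < n - 1 →
      IsStable Q (Equiv.refl (Fin n)) := by
  constructor
  · intro u w hblk
    obtain ⟨hne, h1, h2⟩ := hblk
    simp only [robustProfile, Equiv.refl_apply, Equiv.subRight_apply, sub_self] at h1
    exact absurd h1 (by simp [Fin.not_lt, Fin.le_def])
  · intro Q hdist u w hblk
    obtain ⟨hne, h1, h2⟩ := hblk
    simp only [Equiv.refl_apply, Equiv.refl_symm, Equiv.refl_apply] at hne h1 h2
    -- man side
    have hu : ((Equiv.subRight u w : Fin n) : ℕ) ≤ kendall ((robustProfile n).1 u) (Q.1 u) := by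
      apply key _ _ u w _ h1
      simp [robustProfile]
    have hw : ((Equiv.subRight w u : Fin n) : ℕ) ≤ kendall ((robustProfile n).2 w) (Q.2 w) := by
      apply key _ _ w u _ h2
      simp [robustProfile]
    have hs1 : kendall ((robustProfile n).1 u) (Q.1 u) ≤ ∑ x, kendall ((robustProfile n).1 x) (Q.1 x) :=
      Finset.single_le_sum (f := fun x => kendall ((robustProfile n).1 x) (Q.1 x)) (fun _ _ => Nat.zero_le _) (Finset.mem_univ u)
    have hs2 : kendall ((robustProfile n).2 w) (Q.2 w) ≤ ∑ x, kendall ((robustProfile n).2 x) (Q.2 x) :=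
      Finset.single_le_sum (f := fun x => kendall ((robustProfile n).2 x) (Q.2 x)) (fun _ _ => Nat.zero_le _) (Finset.mem_univ w)
    have hsum : ((Equiv.subRight u w : Fin n) : ℕ) + ((Equiv.subRight w u : Fin n) : ℕ) = n := by
      simp only [Equiv.subRight_apply]
      exact sub_val_add u w hne
    unfold profileDist at hdist
    omega
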